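/- Let γ > 0 and a1, a2, a3 ∈ ℝ. The 4×4 complex matrix L = γ( a1 · σ1⊗σ1 + a2 · σ2ᵀ⊗σ2 + a3 · σ3⊗σ3 − (a1+a2+a3) · I₄ ) has characteristic polynomial X · (X + 2γ(a1+a2)) · (X + 2γ(a1+a3)) · (X + 2γ(a2+a3)); equivalently, its multiset of eigenvalues is {0, −2γ(a1+a2), −2γ(a1+a3), −2γ(a2+a3)}. -/
import Mathlib


open Matrix Complex Kronecker Polynomial

noncomputable section

/-- The Pauli matrices. -/
def pauli1 : Matrix (Fin 2) (Fin 2) ℂ := !![0, 1; 1, 0]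
def pauli2 : Matrix (Fin 2) (Fin 2) ℂ := !![0, -I; I, 0]
def pauli3 : Matrix (Fin 2) (Fin 2) ℂ := !![1, 0; 0, -1]

/-- The generator of evolution
`L = γ( a1 σ1⊗σ1 + a2 σ2ᵀ⊗σ2 + a3 σ3⊗σ3 − (a1+a2+a3) I₄ )`. -/
def gen2 (γ a1 a2 a3 : ℝ) : Matrix (Fin 2 × Fin 2) (Fin 2 × Fin 2) ℂ :=
  (γ : ℂ) • ((a1 : ℂ) • (pauli1 ⊗ₖ pauli1) + (a2 : ℂ) • (pauli2ᵀ ⊗ₖ pauli2)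
    + (a3 : ℂ) • (pauli3 ⊗ₖ pauli3)
    - ((a1 + a2 + a3 : ℝ) : ℂ) • (1 : Matrix (Fin 2 × Fin 2) (Fin 2 × Fin 2) ℂ))

/-- The generator, written explicitly as a `4 × 4` matrix (row-major Kronecker order). -/
def gen2' (γ a1 a2 a3 : ℝ) : Matrix (Fin 4) (Fin 4) ℂ :=
  !![-(γ*(a1+a2)), 0, 0, γ*(a1+a2);
     0, -(γ*(a1+a2+2*a3)), γ*(a1-a2), 0;
     0, γ*(a1-a2), -(γ*(a1+a2+2*a3)), 0;
     γ*(a1+a2), 0, 0, -(γ*(a1+a2))]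

lemma gen2_eq_reindex (γ a1 a2 a3 : ℝ) :
    gen2 γ a1 a2 a3 = reindex finProdFinEquiv.symm finProdFinEquiv.symm (gen2' γ a1 a2 a3) := by
  ext ⟨i1, i2⟩ ⟨j1, j2⟩
  fin_cases i1 <;> fin_cases i2 <;> fin_cases j1 <;> fin_cases j2 <;>
    simp [gen2, gen2', pauli1, pauli2, pauli3, Matrix.one_apply, finProdFinEquiv,
      Matrix.vecHead, Matrix.vecTail, Matrix.transpose_apply, Prod.ext_iff, Fin.ext_iff] <;>
    first
      | tauto
      | (push_cast; ring)

lemma gen2'_charpoly (γ a1 a2 a3 : ℝ) :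
    (gen2' γ a1 a2 a3).charpoly
        = X * (X + C ((2 * γ * (a1 + a2) : ℝ) : ℂ)) * (X + C ((2 * γ * (a1 + a3) : ℝ) : ℂ))
            * (X + C ((2 * γ * (a2 + a3) : ℝ) : ℂ)) := by
  rw [Matrix.charpoly, Matrix.det_succ_row_zero]
  simp only [Fin.sum_univ_succ, Fin.sum_univ_zero, charmatrix_apply, Matrix.det_fin_three,
    Matrix.submatrix_apply, Matrix.one_apply, Matrix.diagonal_apply, map_ofNat, gen2',
    Matrix.cons_val', Matrix.cons_val_zero,
    Matrix.cons_val_one, Matrix.head_cons, Matrix.head_fin_const, Matrix.cons_val_fin_one,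
    Fin.succAbove, Fin.succ, Matrix.of_apply, Matrix.empty_val', Matrix.cons_val_succ]
  norm_num [Fin.lt_def, Fin.castSucc, Fin.castAdd, Fin.castLE]
  push_cast
  have h2 : (C (2:ℂ)) = 2 := map_ofNat C 2
  rw [h2]
  ring

theorem gen2_charpoly (γ a1 a2 a3 : ℝ) (hγ : 0 < γ) :
    (gen2 γ a1 a2 a3).charpoly
        = X * (X + C ((2 * γ * (a1 + a2) : ℝ) : ℂ)) * (X + C ((2 * γ * (a1 + a3) : ℝ) : ℂ))
            * (X + C ((2 * γ * (a2 + a3) : ℝ) : ℂ)) ∧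
      (gen2 γ a1 a2 a3).charpoly.roots
        = {0, ((-(2 * γ * (a1 + a2)) : ℝ) : ℂ), ((-(2 * γ * (a1 + a3)) : ℝ) : ℂ),
            ((-(2 * γ * (a2 + a3)) : ℝ) : ℂ)} := by
  have hcp : (gen2 γ a1 a2 a3).charpoly
      = X * (X + C ((2 * γ * (a1 + a2) : ℝ) : ℂ)) * (X + C ((2 * γ * (a1 + a3) : ℝ) : ℂ))
          * (X + C ((2 * γ * (a2 + a3) : ℝ) : ℂ)) := by
    rw [gen2_eq_reindex, Matrix.charpoly_reindex, gen2'_charpoly]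
  refine ⟨hcp, ?_⟩
  rw [hcp]
  have key : ∀ c : ℂ, (X + C c) = X - C (-c) := by intro c; rw [map_neg, sub_neg_eq_add]
  rw [key, key, key]
  have h1 : ∀ c : ℂ, (X - C c : ℂ[X]) ≠ 0 := fun c => X_sub_C_ne_zero c
  have hX : (X : ℂ[X]) ≠ 0 := X_ne_zero
  rw [roots_mul (mul_ne_zero (mul_ne_zero (mul_ne_zero hX (h1 _)) (h1 _)) (h1 _)),
    roots_mul (mul_ne_zero (mul_ne_zero hX (h1 _)) (h1 _)),
    roots_mul (mul_ne_zero hX (h1 _)), roots_X, roots_X_sub_C, roots_X_sub_C, roots_X_sub_C]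
  push_cast
  rfl

end
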